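/- (Andreief identity) Let (X, μ) be a measure space and f_1, …, f_N : X → ℂ measurable functions lying in L²(X, μ). Then ∫_{X^N} |det (f_j(x_i))_{i,j=1}^N|² dμ(x_1) ⋯ dμ(x_N) = N! · det (G_{ij})_{i,j=1}^N, where G_{ij} := ∫_X f_i(x) · conj(f_j(x)) dμ(x) is the Gram matrix of the family. -/

import Mathlib

open MeasureTheory Complex Set
open scoped NNReal ENNReal

lemma pi_restrict_restrict {ι : Type*} [Fintype ι] {X : ι → Type*} [∀ i, MeasurableSpace (X i)]
    (μ : ∀ i, Measure (X i)) (S : ∀ i, Set (X i)) (hS : ∀ i, MeasurableSet (S i)) :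
    (Measure.pi μ).restrict (Set.pi Set.univ S) =
      (Measure.pi fun i => (μ i).restrict (S i)).restrict (Set.pi Set.univ S) := by
  set T : Set (∀ i, X i) := Set.pi Set.univ S with hT_def
  have hT : MeasurableSet T := MeasurableSet.univ_pi hS
  set ν : ∀ i, Measure (X i) := fun i => (μ i).restrict (S i) with hν
  have hν_le : ∀ i (t : Set (X i)), ν i t ≤ μ i t := by
    intro i t
    rw [hν, Measure.restrict_apply' (hS i)]
    exact measure_mono inter_subset_left
  -- outer measures
  set mμ : ∀ i, OuterMeasure (X i) := fun i => (μ i).toOuterMeasure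
  set mν : ∀ i, OuterMeasure (X i) := fun i => (ν i).toOuterMeasure
  have hOM_le : OuterMeasure.pi mν ≤ OuterMeasure.pi mμ := by
    rw [show OuterMeasure.pi mμ = OuterMeasure.boundedBy (piPremeasure mμ) from rfl,
      OuterMeasure.le_boundedBy]
    intro s
    refine (OuterMeasure.boundedBy_le (m := piPremeasure mν) s).trans ?_
    exact Finset.prod_le_prod' fun i _ => hν_le i _
  have hOM_ge : ∀ A : Set (∀ i, X i), A ⊆ T →
      OuterMeasure.pi mμ A ≤ OuterMeasure.pi mν A := by
    intro A hA
    rw [show OuterMeasure.pi mν A = _ from OuterMeasure.boundedBy_apply A]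
    refine le_iInf fun t => le_iInf fun ht => ?_
    have hA' : A ⊆ ⋃ n, (t n ∩ T) := by
      intro x hx
      rcases mem_iUnion.1 (ht hx) with ⟨n, hn⟩
      exact mem_iUnion.2 ⟨n, hn, hA hx⟩
    calc OuterMeasure.pi mμ A ≤ ∑' n, OuterMeasure.pi mμ (t n ∩ T) :=
          ((OuterMeasure.pi mμ).mono hA').trans (measure_iUnion_le _)
      _ ≤ _ := by
          refine ENNReal.tsum_le_tsum fun n => ?_
          rcases (t n ∩ T).eq_empty_or_nonempty with h | h
          · simp [h]
          have hne : (t n).Nonempty := h.mono inter_subset_left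
          rw [iSup_pos hne]
          refine (OuterMeasure.boundedBy_le (m := piPremeasure mμ) _).trans ?_
          refine Finset.prod_le_prod' fun i _ => ?_
          have hsub : (Function.eval i '' (t n ∩ T)) ⊆ (Function.eval i '' t n) ∩ S i := by
            rintro _ ⟨x, ⟨hx1, hx2⟩, rfl⟩
            exact ⟨mem_image_of_mem _ hx1, hx2 i (mem_univ i)⟩
          calc mμ i (Function.eval i '' (t n ∩ T)) ≤ mμ i ((Function.eval i '' t n) ∩ S i) :=
                measure_mono hsub
            _ = mν i (Function.eval i '' t n) := by
                simp only [mμ, mν, hν]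
                rw [Measure.toOuterMeasure_apply, Measure.toOuterMeasure_apply,
                  Measure.restrict_apply' (hS i)]
  have key : ∀ A : Set (∀ i, X i), MeasurableSet A → A ⊆ T →
      Measure.pi μ A = Measure.pi ν A := by
    intro A hA hAT
    rw [Measure.pi_def, Measure.pi_def, toMeasure_apply _ _ hA, toMeasure_apply _ _ hA]
    exact le_antisymm (hOM_ge A hAT) (hOM_le A)
  ext E hE
  rw [Measure.restrict_apply hE, Measure.restrict_apply hE]
  exact key _ (hE.inter hT) inter_subset_right

lemma integral_pi_restrict {X : Type*} [MeasurableSpace X] (μ : Measure X) {S : Set X}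
    (hS : MeasurableSet S) {N : ℕ} {E : Type*} [NormedAddCommGroup E] [NormedSpace ℝ E]
    (g : (Fin N → X) → E) (hg : ∀ x : Fin N → X, (∃ i, x i ∉ S) → g x = 0) :
    ∫ x, g x ∂(Measure.pi fun _ : Fin N => μ)
      = ∫ x, g x ∂(Measure.pi fun _ : Fin N => μ.restrict S) := by
  have h0 : ∀ x : Fin N → X, x ∉ Set.pi Set.univ (fun _ : Fin N => S) → g x = 0 := by
    intro x hx
    refine hg x ?_
    by_contra h
    push_neg at h
    exact hx fun i _ => h i
  rw [← setIntegral_eq_integral_of_forall_compl_eq_zero (s := Set.pi Set.univ fun _ : Fin N => S)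
      (μ := Measure.pi fun _ : Fin N => μ) h0,
    ← setIntegral_eq_integral_of_forall_compl_eq_zero (s := Set.pi Set.univ fun _ : Fin N => S)
      (μ := Measure.pi fun _ : Fin N => μ.restrict S) h0]
  rw [pi_restrict_restrict (fun _ : Fin N => μ) (fun _ => S) (fun _ => hS)]

lemma sigmaFinite_restrict_of_memL2 {X : Type*} [MeasurableSpace X] (μ : Measure X)
    (N : ℕ) (hN : 0 < N) (f : Fin N → X → ℂ) (hmeas : ∀ j, Measurable (f j))
    (hL2 : ∀ j, MemLp (f j) 2 μ) :
    SigmaFinite (μ.restrict (⋃ j, Function.support (f j))) := by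
  set S := ⋃ j, Function.support (f j) with hS_def
  set A : Fin N × ℕ → Set X := fun p => {x | ((p.2 : ℝ≥0) + 1)⁻¹ ≤ ‖f p.1 x‖₊} ∪ Sᶜ with hA
  refine Measure.sigmaFinite_of_countable (S := Set.range A) (Set.countable_range A) ?_ ?_
  · rintro _ ⟨⟨j, n⟩, rfl⟩
    have h1 : μ.restrict S {x | ((n : ℝ≥0) + 1)⁻¹ ≤ ‖f j x‖₊} < ∞ := by
      refine lt_of_le_of_lt (Measure.restrict_le_self _) ?_
      exact (hL2 j).meas_ge_lt_top two_ne_zero ENNReal.ofNat_ne_top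
        (by positivity)
    have hSm : MeasurableSet S := by
      exact MeasurableSet.iUnion fun j => measurableSet_support (hmeas j)
    have h2 : μ.restrict S Sᶜ = 0 := by
      rw [Measure.restrict_apply' hSm]
      simp
    calc μ.restrict S (A (j, n)) ≤ _ + _ := measure_union_le _ _
      _ < ∞ := by rw [h2]; simpa using h1
  · rw [Set.sUnion_range]
    ext x
    simp only [Set.mem_iUnion, Set.mem_univ, iff_true]
    by_cases hx : x ∈ S
    · rw [hS_def] at hx
      rcases Set.mem_iUnion.1 hx with ⟨j, hj⟩
      have hpos : (0 : ℝ≥0) < ‖f j x‖₊ := by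
        simpa [pos_iff_ne_zero] using hj
      obtain ⟨n, hn⟩ := exists_nat_gt (‖f j x‖₊)⁻¹
      refine ⟨(j, n), Or.inl ?_⟩
      simp only [Set.mem_setOf_eq]
      have h1 : (‖f j x‖₊)⁻¹ ≤ ((n : ℝ≥0) + 1) :=
        hn.le.trans (by simp)
      calc ((n : ℝ≥0) + 1)⁻¹ ≤ ((‖f j x‖₊)⁻¹)⁻¹ := by gcongr
        _ = ‖f j x‖₊ := inv_inv _
    · exact ⟨(⟨0, hN⟩, 0), Or.inr hx⟩

lemma det_sum_perm {N : ℕ} (G : Matrix (Fin N) (Fin N) ℂ) :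
    ∑ σ : Equiv.Perm (Fin N), ∑ τ : Equiv.Perm (Fin N),
      (((Equiv.Perm.sign σ : ℤ) : ℂ) * ((Equiv.Perm.sign τ : ℤ) : ℂ)) * ∏ i, G (σ i) (τ i)
      = (Nat.factorial N : ℂ) * G.det := by
  have hdet : ∑ ρ : Equiv.Perm (Fin N), ((Equiv.Perm.sign ρ : ℤ) : ℂ) * ∏ j, G j (ρ j)
      = G.det := by
    rw [← Matrix.det_transpose G, Matrix.det_apply']
    exact Finset.sum_congr rfl fun ρ _ => by simp [Matrix.transpose_apply]
  have inner : ∀ σ : Equiv.Perm (Fin N),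
      ∑ τ : Equiv.Perm (Fin N),
        (((Equiv.Perm.sign σ : ℤ) : ℂ) * ((Equiv.Perm.sign τ : ℤ) : ℂ)) * ∏ i, G (σ i) (τ i)
        = G.det := by
    intro σ
    have hσ2 : ((Equiv.Perm.sign σ : ℤ) : ℂ) * ((Equiv.Perm.sign σ : ℤ) : ℂ) = 1 := by
      rcases Int.units_eq_one_or (Equiv.Perm.sign σ) with h | h <;> rw [h] <;> norm_num
    rw [← Equiv.sum_comp (Equiv.mulRight σ) fun τ =>
      (((Equiv.Perm.sign σ : ℤ) : ℂ) * ((Equiv.Perm.sign τ : ℤ) : ℂ)) * ∏ i, G (σ i) (τ i)]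
    rw [← hdet]
    refine Finset.sum_congr rfl fun ρ _ => ?_
    have h1 : ∏ i, G (σ i) ((Equiv.mulRight σ ρ) i) = ∏ j, G j (ρ j) := by
      simpa using Equiv.prod_comp σ fun j => G j (ρ j)
    have h2 : ((Equiv.Perm.sign (Equiv.mulRight σ ρ) : ℤ) : ℂ)
        = ((Equiv.Perm.sign ρ : ℤ) : ℂ) * ((Equiv.Perm.sign σ : ℤ) : ℂ) := by
      rw [show Equiv.mulRight σ ρ = ρ * σ from rfl, map_mul]
      push_cast
      ring
    rw [h1, h2]
    calc ((Equiv.Perm.sign σ : ℤ) : ℂ) *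
          (((Equiv.Perm.sign ρ : ℤ) : ℂ) * ((Equiv.Perm.sign σ : ℤ) : ℂ)) * ∏ j, G j (ρ j)
        = (((Equiv.Perm.sign σ : ℤ) : ℂ) * ((Equiv.Perm.sign σ : ℤ) : ℂ)) *
            (((Equiv.Perm.sign ρ : ℤ) : ℂ) * ∏ j, G j (ρ j)) := by ring
      _ = ((Equiv.Perm.sign ρ : ℤ) : ℂ) * ∏ j, G j (ρ j) := by rw [hσ2, one_mul]
  rw [Finset.sum_congr rfl fun σ _ => inner σ, Finset.sum_const, Finset.card_univ,
    Fintype.card_perm, Fintype.card_fin, nsmul_eq_mul]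

lemma andreief_sf {X : Type*} [MeasurableSpace X] (ν : Measure X) [SigmaFinite ν]
    (N : ℕ) (f : Fin N → X → ℂ) (hmeas : ∀ j, Measurable (f j))
    (hL2 : ∀ j, MemLp (f j) 2 ν) :
    ((∫ x : Fin N → X,
        ‖(Matrix.of fun i j : Fin N => f j (x i)).det‖ ^ 2
          ∂(Measure.pi fun _ : Fin N => ν) : ℝ) : ℂ) =
      (Nat.factorial N : ℂ) *
        (Matrix.of fun i j : Fin N =>
          ∫ x, f i x * (starRingEnd ℂ) (f j x) ∂ν).det := by
  letI : MeasureSpace X := ⟨ν⟩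
  have hint : ∀ a b : Fin N, Integrable (fun y => f a y * (starRingEnd ℂ) (f b y)) ν := by
    intro a b
    have hconj : MemLp (fun y => (starRingEnd ℂ) (f b y)) 2 ν :=
      MemLp.of_le (hL2 b) (RCLike.continuous_conj.comp_aestronglyMeasurable (hmeas b).aestronglyMeasurable)
        (Filter.Eventually.of_forall fun y => by simp)
    have h := MemLp.smul (p := 2) (q := 2) (r := 1) hconj (hL2 a)
    rw [← memLp_one_iff_integrable]
    exact h
  have expand : ∀ x : Fin N → X,
      ((‖(Matrix.of fun i j : Fin N => f j (x i)).det‖ ^ 2 : ℝ) : ℂ)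
        = ∑ σ : Equiv.Perm (Fin N), ∑ τ : Equiv.Perm (Fin N),
            (((Equiv.Perm.sign σ : ℤ) : ℂ) * ((Equiv.Perm.sign τ : ℤ) : ℂ)) *
              ∏ i, (f (σ i) (x i) * (starRingEnd ℂ) (f (τ i) (x i))) := by
    intro x
    have hd : (Matrix.of fun i j : Fin N => f j (x i)).det
        = ∑ σ : Equiv.Perm (Fin N), ((Equiv.Perm.sign σ : ℤ) : ℂ) * ∏ i, f (σ i) (x i) := by
      rw [← Matrix.det_transpose, Matrix.det_apply']
      rfl
    rw [Complex.sq_norm, ← Complex.mul_conj, hd, map_sum, Finset.sum_mul_sum]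
    refine Finset.sum_congr rfl fun σ _ => Finset.sum_congr rfl fun τ _ => ?_
    rw [map_mul, map_prod, map_intCast, Finset.prod_mul_distrib]
    ring
  have hprod : ∀ σ τ : Equiv.Perm (Fin N),
      Integrable (fun x : Fin N → X =>
        ∏ i, (f (σ i) (x i) * (starRingEnd ℂ) (f (τ i) (x i))))
        (Measure.pi fun _ : Fin N => ν) := by
    intro σ τ
    have h := MeasureTheory.Integrable.fin_nat_prod
      (f := fun i y => f (σ i) y * (starRingEnd ℂ) (f (τ i) y)) (fun i => hint (σ i) (τ i))
    exact h
  calc ((∫ x : Fin N → X,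
        ‖(Matrix.of fun i j : Fin N => f j (x i)).det‖ ^ 2
          ∂(Measure.pi fun _ : Fin N => ν) : ℝ) : ℂ)
      = ∫ x : Fin N → X,
          ((‖(Matrix.of fun i j : Fin N => f j (x i)).det‖ ^ 2 : ℝ) : ℂ)
            ∂(Measure.pi fun _ : Fin N => ν) := integral_ofReal.symm
    _ = ∫ x : Fin N → X,
          (∑ σ : Equiv.Perm (Fin N), ∑ τ : Equiv.Perm (Fin N),
            (((Equiv.Perm.sign σ : ℤ) : ℂ) * ((Equiv.Perm.sign τ : ℤ) : ℂ)) *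
              ∏ i, (f (σ i) (x i) * (starRingEnd ℂ) (f (τ i) (x i))))
            ∂(Measure.pi fun _ : Fin N => ν) := by
        exact integral_congr_ae (Filter.Eventually.of_forall expand)
    _ = ∑ σ : Equiv.Perm (Fin N), ∑ τ : Equiv.Perm (Fin N),
          (((Equiv.Perm.sign σ : ℤ) : ℂ) * ((Equiv.Perm.sign τ : ℤ) : ℂ)) *
            ∏ i, ∫ y, f (σ i) y * (starRingEnd ℂ) (f (τ i) y) ∂ν := by
        rw [integral_finset_sum _ fun σ _ =>
          integrable_finset_sum _ fun τ _ => (hprod σ τ).const_mul _]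
        refine Finset.sum_congr rfl fun σ _ => ?_
        rw [integral_finset_sum _ fun τ _ => (hprod σ τ).const_mul _]
        refine Finset.sum_congr rfl fun τ _ => ?_
        rw [integral_const_mul]
        congr 1
        have h := MeasureTheory.integral_fin_nat_prod_eq_prod
          (μ := fun _ => ν) (f := fun i y => f (σ i) y * (starRingEnd ℂ) (f (τ i) y))
        exact h
    _ = (Nat.factorial N : ℂ) *
        (Matrix.of fun i j : Fin N =>
          ∫ x, f i x * (starRingEnd ℂ) (f j x) ∂ν).det := by
        rw [← det_sum_perm (Matrix.of fun i j : Fin N =>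
          ∫ x, f i x * (starRingEnd ℂ) (f j x) ∂ν)]
        simp only [Matrix.of_apply]

/-- Andreief identity: the `L²`-integral of the squared Slater determinant equals
`N !` times the determinant of the Gram matrix. -/
theorem andreief_identity {X : Type*} [MeasurableSpace X] (μ : Measure X)
    (N : ℕ) (hN : 0 < N) (f : Fin N → X → ℂ)
    (hmeas : ∀ j, Measurable (f j))
    (hL2 : ∀ j, MemLp (f j) 2 μ) :
    ((∫ x : Fin N → X,
        ‖(Matrix.of fun i j : Fin N => f j (x i)).det‖ ^ 2
          ∂(Measure.pi fun _ : Fin N => μ) : ℝ) : ℂ) =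
      (Nat.factorial N : ℂ) *
        (Matrix.of fun i j : Fin N =>
          ∫ x, f i x * (starRingEnd ℂ) (f j x) ∂μ).det := by
  classical
  set S : Set X := ⋃ j, Function.support (f j) with hS_def
  have hSm : MeasurableSet S := MeasurableSet.iUnion fun j => measurableSet_support (hmeas j)
  have hzero : ∀ (j : Fin N) (y : X), y ∉ S → f j y = 0 := by
    intro j y hy
    by_contra h
    exact hy (Set.mem_iUnion.2 ⟨j, h⟩)
  haveI : SigmaFinite (μ.restrict S) := sigmaFinite_restrict_of_memL2 μ N hN f hmeas hL2
  have hLHS : (∫ x : Fin N → X,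
        ‖(Matrix.of fun i j : Fin N => f j (x i)).det‖ ^ 2
          ∂(Measure.pi fun _ : Fin N => μ))
      = ∫ x : Fin N → X,
        ‖(Matrix.of fun i j : Fin N => f j (x i)).det‖ ^ 2
          ∂(Measure.pi fun _ : Fin N => μ.restrict S) := by
    refine integral_pi_restrict μ hSm _ ?_
    rintro x ⟨i, hi⟩
    have hdet : (Matrix.of fun i j : Fin N => f j (x i)).det = 0 :=
      Matrix.det_eq_zero_of_row_eq_zero i fun j => hzero j (x i) hi
    simp [hdet]
  have hGram : ∀ a b : Fin N, (∫ x, f a x * (starRingEnd ℂ) (f b x) ∂μ)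
      = ∫ x, f a x * (starRingEnd ℂ) (f b x) ∂(μ.restrict S) := by
    intro a b
    refine (setIntegral_eq_integral_of_forall_compl_eq_zero fun y hy => ?_).symm
    rw [hzero a y hy, zero_mul]
  rw [hLHS, andreief_sf (μ.restrict S) N f hmeas fun j => (hL2 j).restrict S]
  congr 2
  ext a b
  exact (hGram a b).symm
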